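/- Dual Pair Theorem: Let A and B be N x K ternary CCMs (entries in {-1,0,1}, with A A^* and B B^* diagonally regular). If (i) |A_{n,k}| + |B_{n,k}| = 1 for all n, k, and (ii) B A^* - B^* A is diagonally regular, then Z = A + iB is an N x K matrix whose entries are all in {1, i, -1, -i} and Z Z^* is diagonally regular (i.e., Z is a quad-phase CCM). -/

import Mathlib

/-- An `N × N` matrix is diagonally regular if every off-diagonal sums to zero. -/
def DiagReg {N : ℕ} (Q : Matrix (Fin N) (Fin N) ℂ) : Prop :=
  ∀ d : ℤ, d ≠ 0 →
    (∑ n : Fin N, ∑ m : Fin N, if (m : ℤ) - (n : ℤ) = d then Q n m else 0) = 0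

lemma DiagReg.add {N : ℕ} {P Q : Matrix (Fin N) (Fin N) ℂ}
    (hP : DiagReg P) (hQ : DiagReg Q) : DiagReg (P + Q) := by
  intro d hd
  have := hP d hd
  have := hQ d hd
  simp only [Matrix.add_apply]
  rw [show (∑ n : Fin N, ∑ m : Fin N, if (m : ℤ) - (n : ℤ) = d then P n m + Q n m else 0)
      = (∑ n : Fin N, ∑ m : Fin N, if (m : ℤ) - (n : ℤ) = d then P n m else 0)
      + (∑ n : Fin N, ∑ m : Fin N, if (m : ℤ) - (n : ℤ) = d then Q n m else 0) by
    rw [← Finset.sum_add_distrib]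
    refine Finset.sum_congr rfl fun n _ => ?_
    rw [← Finset.sum_add_distrib]
    refine Finset.sum_congr rfl fun m _ => ?_
    split <;> simp]
  rw [hP d hd, hQ d hd, add_zero]

lemma DiagReg.smul {N : ℕ} {Q : Matrix (Fin N) (Fin N) ℂ} (c : ℂ)
    (hQ : DiagReg Q) : DiagReg (c • Q) := by
  intro d hd
  simp only [Matrix.smul_apply, smul_eq_mul]
  rw [show (∑ n : Fin N, ∑ m : Fin N, if (m : ℤ) - (n : ℤ) = d then c * Q n m else 0)
      = c * (∑ n : Fin N, ∑ m : Fin N, if (m : ℤ) - (n : ℤ) = d then Q n m else 0) by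
    rw [Finset.mul_sum]
    refine Finset.sum_congr rfl fun n _ => ?_
    rw [Finset.mul_sum]
    refine Finset.sum_congr rfl fun m _ => ?_
    split <;> simp]
  rw [hQ d hd, mul_zero]

/-- Dual Pair Theorem: if `A` and `B` are ternary CCMs (entries in `{-1,0,1}`,
diagonally regular row Gramians) forming a dual pair (`|A_{n,k}| + |B_{n,k}| = 1`)
whose commutator `B Aᴴ - A Bᴴ` is diagonally regular, then `Z = A + iB` is a
quad-phase CCM: every entry lies in `{1, i, -1, -i}` and `Z Zᴴ` is diagonally
regular. -/
theorem dual_pair (N K : ℕ) (A B : Matrix (Fin N) (Fin K) ℂ)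
    (hA : ∀ n k, A n k ∈ ({-1, 0, 1} : Set ℂ))
    (hB : ∀ n k, B n k ∈ ({-1, 0, 1} : Set ℂ))
    (hAreg : DiagReg (A * A.conjTranspose))
    (hBreg : DiagReg (B * B.conjTranspose))
    (hdual : ∀ n k, ‖A n k‖ + ‖B n k‖ = 1)
    (hcomm : DiagReg (B * A.conjTranspose - A * B.conjTranspose)) :
    (∀ n k, (A + Complex.I • B) n k ∈ ({1, Complex.I, -1, -Complex.I} : Set ℂ)) ∧
    DiagReg ((A + Complex.I • B) * (A + Complex.I • B).conjTranspose) := by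
  constructor
  · intro n k
    have hd := hdual n k
    simp only [Matrix.add_apply, Matrix.smul_apply, smul_eq_mul]
    rcases hA n k with hA0 | hA0 | hA0 <;> rcases hB n k with hB0 | hB0 | hB0 <;>
      rw [hA0, hB0] at hd ⊢ <;> simp_all
  · have key : (A + Complex.I • B) * (A + Complex.I • B).conjTranspose
        = (A * A.conjTranspose + B * B.conjTranspose)
          + Complex.I • (B * A.conjTranspose - A * B.conjTranspose) := by
      rw [Matrix.conjTranspose_add, Matrix.conjTranspose_smul]
      rw [Matrix.add_mul, Matrix.mul_add, Matrix.mul_add]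
      rw [Matrix.smul_mul, Matrix.smul_mul, Matrix.mul_smul, Matrix.mul_smul]
      have hst : star Complex.I = -Complex.I := Complex.conj_I
      rw [hst, smul_smul]
      rw [show Complex.I * -Complex.I = 1 by
        rw [mul_neg, Complex.I_mul_I]; norm_num]
      rw [one_smul, smul_sub]
      module
    rw [key]
    exact (hAreg.add hBreg).add (DiagReg.smul Complex.I hcomm)
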